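/- Let x, y, z, u_x, u_y, u_z be real random variables with structural equations z = βw + u_z, x = δz + u_x, y = αx + u_y, where w, u_z, u_x, u_y are random variables such that u_z is uncorrelated with w, u_x, and u_y, and Var(u_z) > 0, δ ≠ 0. Define z* = z − βw. Then Cov(z*, x) = δ·Var(u_z) ≠ 0 and Cov(z*, y) = α·Cov(z*, x), hence α = Cov(z*, y)/Cov(z*, x). -/

import Mathlib

open MeasureTheory

/-- Covariance of two real random variables. -/
noncomputable def cov {Ω : Type*} [MeasurableSpace Ω] (μ : Measure Ω) (f g : Ω → ℝ) : ℝ :=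
  ∫ ω, (f ω - ∫ x, f x ∂μ) * (g ω - ∫ x, g x ∂μ) ∂μ

section Aux

variable {Ω : Type*} [MeasurableSpace Ω] {μ : Measure Ω} [IsProbabilityMeasure μ]

private lemma int2 {f : Ω → ℝ} (hf : MemLp f 2 μ) : Integrable f μ :=
  hf.integrable one_le_two

private lemma intmul2 {f g : Ω → ℝ} (hf : MemLp f 2 μ) (hg : MemLp g 2 μ) :
    Integrable (fun ω => f ω * g ω) μ := by
  have h : MemLp (f • g) 1 μ := hg.smul hf (hpqr := ⟨by rw [inv_one, ENNReal.inv_two_add_inv_two]⟩)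
  exact memLp_one_iff_integrable.mp h

private lemma cov_smul_right (f g : Ω → ℝ) (c : ℝ) :
    cov μ f (fun ω => c * g ω) = c * cov μ f g := by
  unfold cov
  rw [← integral_const_mul c (fun ω => (f ω - ∫ x, f x ∂μ) * (g ω - ∫ x, g x ∂μ))]
  congr 1; funext ω
  rw [integral_const_mul]; ring

private lemma cov_add_right {f g h : Ω → ℝ} (hf : MemLp f 2 μ) (hg : MemLp g 2 μ)
    (hh : MemLp h 2 μ) :
    cov μ f (fun ω => g ω + h ω) = cov μ f g + cov μ f h := by
  have hfc : MemLp (fun ω => f ω - ∫ x, f x ∂μ) 2 μ := hf.sub (memLp_const _)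
  have hgc : MemLp (fun ω => g ω - ∫ x, g x ∂μ) 2 μ := hg.sub (memLp_const _)
  have hhc : MemLp (fun ω => h ω - ∫ x, h x ∂μ) 2 μ := hh.sub (memLp_const _)
  unfold cov
  rw [integral_add (int2 hg) (int2 hh), ← integral_add (intmul2 hfc hgc) (intmul2 hfc hhc)]
  congr 1; funext ω; ring

end Aux

/-- in the SEM  z = βw + u_z, x = δz + u_x, y = αx + u_y, with u_z
uncorrelated with w, u_x, u_y, Var(u_z) > 0 and δ ≠ 0, the auxiliary variable
z* = z − βw is an instrument for α:  Cov(z*,x) = δ·Var(u_z) ≠ 0,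
Cov(z*,y) = α·Cov(z*,x), hence α = Cov(z*,y)/Cov(z*,x). -/
theorem auxiliary_instrument_identifies_alpha
    {Ω : Type*} [MeasurableSpace Ω] (μ : Measure Ω) [IsProbabilityMeasure μ]
    (w uz ux uy z x y : Ω → ℝ) (α β δ : ℝ)
    (hw : MemLp w 2 μ) (huz : MemLp uz 2 μ) (hux : MemLp ux 2 μ) (huy : MemLp uy 2 μ)
    (hz : ∀ ω, z ω = β * w ω + uz ω)
    (hx : ∀ ω, x ω = δ * z ω + ux ω)
    (hy : ∀ ω, y ω = α * x ω + uy ω)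
    (huzw : cov μ uz w = 0) (huzux : cov μ uz ux = 0) (huzuy : cov μ uz uy = 0)
    (hvar : 0 < cov μ uz uz) (hδ : δ ≠ 0)
    (zstar : Ω → ℝ) (hzstar : ∀ ω, zstar ω = z ω - β * w ω) :
    cov μ zstar x = δ * cov μ uz uz ∧ cov μ zstar x ≠ 0 ∧
      cov μ zstar y = α * cov μ zstar x ∧
      α = cov μ zstar y / cov μ zstar x := by
  have hzs : zstar = uz := by funext ω; rw [hzstar, hz]; ring
  rw [hzs]
  have hzf : z = fun ω => β * w ω + uz ω := funext hz
  have hz2 : MemLp z 2 μ := by rw [hzf]; exact (hw.const_mul β).add huz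
  have hx2 : MemLp x 2 μ := by
    rw [funext hx]; exact (hz2.const_mul δ).add hux
  have hcovz : cov μ uz z = cov μ uz uz := by
    rw [hzf, cov_add_right huz (hw.const_mul β) huz, cov_smul_right, huzw]; ring
  have h1 : cov μ uz x = δ * cov μ uz uz := by
    rw [funext hx, cov_add_right huz (hz2.const_mul δ) hux, cov_smul_right, hcovz, huzux]
    ring
  have h2 : cov μ uz x ≠ 0 := by
    rw [h1]; exact mul_ne_zero hδ (ne_of_gt hvar)
  have h3 : cov μ uz y = α * cov μ uz x := by
    rw [funext hy, cov_add_right huz (hx2.const_mul α) huy, cov_smul_right, huzuy]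
    ring
  exact ⟨h1, h2, h3, by rw [h3]; field_simp⟩
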